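/- Let d ≥ 0 and ε ∈ [0,1) with (d,ε) ≠ (0,0), and let C > 0 satisfy C²(1−ε²) > 1. Then there exists y ∈ (1/C, 1) such that d·arccosh(Cy) + ε = √(1−y²); that is, the translated catenoid profile intersects the upper unit semicircle at some radius y ∈ (1/C, 1). -/
import Mathlib


/-- The inverse of `cosh` on `[1,∞)`: `arccosh x = log (x + √(x² − 1))` for `x ≥ 1`. -/
noncomputable def arccosh (x : ℝ) : ℝ := Real.log (x + Real.sqrt (x ^ 2 - 1))

/-- For `d ≥ 0`, `ε ∈ [0,1)` with `(d,ε) ≠ (0,0)`, and `C > 0` with `C²(1−ε²) > 1`, the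
translated catenoid profile `y ↦ d·arccosh(Cy) + ε` intersects the upper unit semicircle
at some radius `y ∈ (1/C, 1)`. -/
theorem catenoid_meets_semicircle (d ε C : ℝ) (hd : 0 ≤ d)
    (hε : ε ∈ Set.Ico (0 : ℝ) 1) (hne : ¬(d = 0 ∧ ε = 0)) (hC : 0 < C)
    (h : 1 < C ^ 2 * (1 - ε ^ 2)) :
    ∃ y ∈ Set.Ioo (1 / C) 1, d * arccosh (C * y) + ε = Real.sqrt (1 - y ^ 2) := by
  obtain ⟨hε0, hε1⟩ := hε
  have hC2 : (0:ℝ) < C ^ 2 := by positivity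
  have hεsq : ε ^ 2 < 1 - 1 / C ^ 2 := by
    have : 1 / C ^ 2 < 1 - ε ^ 2 := by
      rw [div_lt_iff₀ hC2]; linarith [h]
    linarith
  have hC1 : 1 < C := by
    nlinarith [sq_nonneg ε, sq_nonneg (C - 1)]
  set f : ℝ → ℝ := fun y => d * arccosh (C * y) + ε - Real.sqrt (1 - y ^ 2) with hf
  have hab : 1 / C ≤ 1 := by
    rw [div_le_one hC]; linarith
  -- continuity
  have hcont : ContinuousOn f (Set.Icc (1 / C) 1) := by
    apply ContinuousOn.sub
    · apply ContinuousOn.add _ continuousOn_const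
      apply ContinuousOn.mul continuousOn_const
      unfold arccosh
      apply ContinuousOn.log
      · fun_prop
      · intro y hy
        have h1 : 1 ≤ C * y := by
          have := hy.1
          calc (1:ℝ) = C * (1 / C) := by field_simp
          _ ≤ C * y := by exact mul_le_mul_of_nonneg_left this hC.le
        have := Real.sqrt_nonneg ((C * y) ^ 2 - 1)
        nlinarith
    · fun_prop
  -- value at left endpoint
  have hCleft : C * (1 / C) = 1 := by field_simp
  have harccosh1 : arccosh 1 = 0 := by
    unfold arccosh
    norm_num
  have hleft : f (1 / C) < 0 := by
    simp only [hf, hCleft, harccosh1, mul_zero, zero_add]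
    have h1 : 1 - (1 / C) ^ 2 = 1 - 1 / C ^ 2 := by ring
    rw [h1, sub_neg]
    rw [show (ε : ℝ) = Real.sqrt (ε ^ 2) by rw [Real.sqrt_sq hε0]]
    apply Real.sqrt_lt_sqrt (by positivity) hεsq
  -- value at right endpoint
  have hright : 0 < f 1 := by
    have hs : Real.sqrt (1 - (1:ℝ) ^ 2) = 0 := by norm_num
    simp only [hf, mul_one, hs, sub_zero]
    have harc : 0 < arccosh C := by
      unfold arccosh
      apply Real.log_pos
      have := Real.sqrt_nonneg (C ^ 2 - 1)
      linarith
    rcases eq_or_lt_of_le hd with hd0 | hd0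
    · rcases eq_or_lt_of_le hε0 with hε0' | hε0'
      · exact absurd ⟨hd0.symm, hε0'.symm⟩ hne
      · positivity
    · positivity
  -- IVT
  have := intermediate_value_Ioo hab hcont
  have h0 : (0:ℝ) ∈ Set.Ioo (f (1 / C)) (f 1) := ⟨hleft, hright⟩
  obtain ⟨y, hy, hfy⟩ := this h0
  exact ⟨y, hy, by simpa [hf, sub_eq_zero] using hfy⟩
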